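/- For all integers k ≥ 0 and 0 ≤ i ≤ k, and for every real number x that is not equal to cos(rπ/(k+2)) for any r ∈ {1,…,k+1}, one has U_{k-i}(x)/U_{k+1}(x) = (1/(k+2)) · Σ_{r=1}^{k+1} (-1)^{r+1} · U_{k-i}(cos(rπ/(k+2))) · sin²(rπ/(k+2)) / (x − cos(rπ/(k+2))). -/

import Mathlib

open Real Polynomial Polynomial.Chebyshev Finset

private lemma U_natDegree_coeff : ∀ n : ℕ, ((U ℝ (n:ℤ)).natDegree = n ∧ (U ℝ (n:ℤ)).coeff n = 2^n)
  | 0 => by simp [U_zero]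
  | 1 => by constructor <;> simp [U_one, coeff_X]
  | (n+2) => by
    have h1 := U_natDegree_coeff (n+1)
    have h0 := U_natDegree_coeff n
    have hrec : U ℝ ((n:ℤ)+2) = 2 * X * U ℝ ((n:ℤ)+1) - U ℝ (n:ℤ) := U_add_two ℝ n
    have hcast : ((n+2 : ℕ) : ℤ) = (n:ℤ) + 2 := by push_cast; ring
    have hcast1 : ((n+1 : ℕ) : ℤ) = (n:ℤ) + 1 := by push_cast; ring
    have hXmul : 2 * X * U ℝ ((n:ℤ)+1) = X * (2 * U ℝ ((n:ℤ)+1)) := by ring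
    have hco : (U ℝ ((n+2:ℕ):ℤ)).coeff (n+2) = 2^(n+2) := by
      rw [hcast, hrec, coeff_sub,
        coeff_eq_zero_of_natDegree_lt (lt_of_eq_of_lt h0.1 (by omega)), sub_zero,
        hXmul, coeff_X_mul, coeff_ofNat_mul, ← hcast1, h1.2]
      ring
    have hle : (U ℝ ((n+2:ℕ):ℤ)).natDegree ≤ n + 2 := by
      rw [hcast, hrec]
      refine le_trans (natDegree_sub_le _ _) (max_le ?_ (le_of_eq_of_le h0.1 (by omega)))
      refine le_trans (natDegree_mul_le) ?_
      have : (2 * X : ℝ[X]).natDegree ≤ 1 :=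
        le_trans natDegree_mul_le (by simp)
      rw [hcast1] at h1
      omega
    have hge : n + 2 ≤ (U ℝ ((n+2:ℕ):ℤ)).natDegree :=
      le_natDegree_of_ne_zero (by rw [hco]; positivity)
    exact ⟨le_antisymm hle hge, hco⟩

private lemma theta_mem (k r : ℕ) (hr : r ∈ Finset.Icc 1 (k+1)) :
    0 < (r:ℝ) * π / (k+2) ∧ (r:ℝ) * π / (k+2) < π := by
  obtain ⟨h1, h2⟩ := Finset.mem_Icc.mp hr
  have hπ := pi_pos
  have hr1 : (1:ℝ) ≤ (r:ℝ) := by exact_mod_cast h1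
  have hrk : (r:ℝ) < (k:ℝ) + 2 := by exact_mod_cast (by omega : r < k + 2)
  constructor
  · apply div_pos (by nlinarith) (by positivity)
  · rw [div_lt_iff₀ (by positivity)]
    nlinarith

private lemma sin_theta_pos (k r : ℕ) (hr : r ∈ Finset.Icc 1 (k+1)) :
    0 < Real.sin ((r:ℝ) * π / (k+2)) := by
  obtain ⟨h1, h2⟩ := theta_mem k r hr
  exact Real.sin_pos_of_pos_of_lt_pi h1 h2

private lemma arg_eq (k r : ℕ) : ((k:ℝ) + 2) * ((r:ℝ) * π / (k+2)) = (r:ℝ) * π := by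
  have : ((k:ℝ) + 2) ≠ 0 := by positivity
  field_simp

private lemma U_root (k r : ℕ) (hr : r ∈ Finset.Icc 1 (k+1)) :
    (U ℝ ((k:ℤ)+1)).eval (Real.cos ((r:ℝ) * π / (k+2))) = 0 := by
  have hs : Real.sin ((r:ℝ)*π/(k+2)) ≠ 0 := ne_of_gt (sin_theta_pos k r hr)
  have h := U_real_cos ((r:ℝ)*π/(k+2)) ((k:ℤ)+1)
  have hk2 : ((k:ℝ) + 2) ≠ 0 := by positivity
  have harg : ((((k:ℤ)+1 : ℤ) : ℝ) + 1) * ((r:ℝ)*π/(k+2)) = (r:ℝ) * π := by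
    push_cast
    field_simp
    ring
  rw [harg, Real.sin_nat_mul_pi] at h
  exact (mul_eq_zero.mp h).resolve_right hs

private lemma cos_r_pi (r : ℕ) : Real.cos ((r:ℝ) * π) = (-1:ℝ)^r := by
  simpa using Real.cos_nat_mul_pi_sub 0 r

private lemma U_deriv (k r : ℕ) (hr : r ∈ Finset.Icc 1 (k+1)) :
    (derivative (U ℝ ((k:ℤ)+1))).eval (Real.cos ((r:ℝ) * π / (k+2)))
      = (-1:ℝ)^(r+1) * ((k:ℝ)+2) / Real.sin ((r:ℝ) * π / (k+2)) ^ 2 := by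
  set θr : ℝ := (r:ℝ) * π / (k+2) with hθ
  have hsin : Real.sin θr ≠ 0 := ne_of_gt (sin_theta_pos k r hr)
  have hfg : (fun θ : ℝ => (U ℝ ((k:ℤ)+1)).eval (Real.cos θ) * Real.sin θ)
      = fun θ : ℝ => Real.sin (((k:ℝ)+2) * θ) := by
    funext θ
    rw [U_real_cos]
    push_cast
    ring_nf
  have hd1 : HasDerivAt (fun θ : ℝ => (U ℝ ((k:ℤ)+1)).eval (Real.cos θ) * Real.sin θ)
      ((derivative (U ℝ ((k:ℤ)+1))).eval (Real.cos θr) * (-Real.sin θr) * Real.sin θr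
        + (U ℝ ((k:ℤ)+1)).eval (Real.cos θr) * Real.cos θr) θr :=
    (((U ℝ ((k:ℤ)+1)).hasDerivAt (Real.cos θr)).comp θr (Real.hasDerivAt_cos θr)).mul
      (Real.hasDerivAt_sin θr)
  have hd2 : HasDerivAt (fun θ : ℝ => Real.sin (((k:ℝ)+2) * θ))
      (Real.cos (((k:ℝ)+2) * θr) * ((k:ℝ)+2)) θr :=
    (Real.hasDerivAt_sin _).comp θr (by simpa using (hasDerivAt_id θr).const_mul ((k:ℝ)+2))
  rw [hfg] at hd1
  have heq := hd1.unique hd2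
  rw [U_root k r hr, zero_mul, add_zero, hθ, arg_eq k r, cos_r_pi r] at heq
  have h2 : Real.sin θr ^ 2 ≠ 0 := pow_ne_zero 2 hsin
  rw [eq_div_iff h2, pow_succ]
  linear_combination -heq

private lemma nodes_injOn (k : ℕ) :
    Set.InjOn (fun r : ℕ => Real.cos ((r:ℝ) * π / (k+2))) (Finset.Icc 1 (k+1)) := by
  intro a ha b hb hab
  simp only [Finset.coe_Icc, Set.mem_Icc] at ha hb
  have hma : (a:ℝ) * π / (k+2) ∈ Set.Icc 0 π :=
    ⟨le_of_lt (theta_mem k a (Finset.mem_Icc.mpr ha)).1,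
     le_of_lt (theta_mem k a (Finset.mem_Icc.mpr ha)).2⟩
  have hmb : (b:ℝ) * π / (k+2) ∈ Set.Icc 0 π :=
    ⟨le_of_lt (theta_mem k b (Finset.mem_Icc.mpr hb)).1,
     le_of_lt (theta_mem k b (Finset.mem_Icc.mpr hb)).2⟩
  have h := Real.injOn_cos hma hmb hab
  have hk2 : ((k:ℝ) + 2) ≠ 0 := by positivity
  field_simp at h
  exact_mod_cast h

private lemma U_eq_nodal (k : ℕ) :
    U ℝ ((k:ℤ)+1) = C ((2:ℝ)^(k+1)) *
      Lagrange.nodal (Finset.Icc 1 (k+1)) (fun r : ℕ => Real.cos ((r:ℝ) * π / (k+2))) := by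
  classical
  set v : ℕ → ℝ := fun r : ℕ => Real.cos ((r:ℝ) * π / (k+2)) with hv
  set s : Finset ℕ := Finset.Icc 1 (k+1) with hs
  have hcard : #s = k+1 := by simp [hs]
  have hcast : ((k+1:ℕ):ℤ) = (k:ℤ)+1 := by push_cast; ring
  have hUdeg : (U ℝ ((k:ℤ)+1)).natDegree = k+1 := by
    rw [← hcast]; exact (U_natDegree_coeff (k+1)).1
  have hUco : (U ℝ ((k:ℤ)+1)).coeff (k+1) = 2^(k+1) := by
    rw [← hcast]; exact (U_natDegree_coeff (k+1)).2
  set q : ℝ[X] := U ℝ ((k:ℤ)+1) - C ((2:ℝ)^(k+1)) * Lagrange.nodal s v with hq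
  have hqco : q.coeff (k+1) = 0 := by
    rw [hq, coeff_sub, hUco, coeff_C_mul]
    have : (Lagrange.nodal s v).coeff (k+1) = 1 := by
      have := Lagrange.nodal_monic (s := s) (v := v)
      have hnd : (Lagrange.nodal s v).natDegree = k+1 := by
        rw [Lagrange.natDegree_nodal, hcard]
      rw [← hnd]
      exact this.coeff_natDegree
    rw [this]; ring
  have hqdeg : q.natDegree ≤ k+1 := by
    refine le_trans (natDegree_sub_le _ _) (max_le (le_of_eq hUdeg) ?_)
    refine le_trans natDegree_mul_le ?_
    rw [natDegree_C, Lagrange.natDegree_nodal, hcard]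
    omega
  have hq0 : q = 0 := by
    by_contra hne
    have hlt : q.natDegree < k+1 := by
      refine lt_of_le_of_ne hqdeg fun h => hne ?_
      exact leadingCoeff_eq_zero.mp (by rw [leadingCoeff, h, hqco])
    have := eq_zero_of_natDegree_lt_card_of_eval_eq_zero' q (s.image v) ?_ ?_
    · exact hne this
    · intro y hy
      obtain ⟨r, hrs, rfl⟩ := Finset.mem_image.mp hy
      rw [hq, eval_sub, eval_mul, eval_C, Lagrange.eval_nodal_at_node hrs,
        U_root k r hrs]
      ring
    · rw [Finset.card_image_of_injOn (nodes_injOn k)]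
      simpa [Nat.card_Icc] using hlt
  have := sub_eq_zero.mp hq0
  exact this

private lemma weight_eq (k r : ℕ) (hr : r ∈ Finset.Icc 1 (k+1)) :
    Lagrange.nodalWeight (Finset.Icc 1 (k+1)) (fun r : ℕ => Real.cos ((r:ℝ) * π / (k+2))) r
      = 2^(k+1) * ((-1:ℝ)^(r+1) * Real.sin ((r:ℝ) * π / (k+2))^2 / ((k:ℝ)+2)) := by
  classical
  have e1 := Lagrange.eval_nodal_derivative_eval_node_eq (s := Finset.Icc 1 (k+1))
    (v := fun r : ℕ => Real.cos ((r:ℝ) * π / (k+2))) hr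
  beta_reduce at e1
  rw [Lagrange.nodalWeight_eq_eval_nodal_erase_inv, ← e1]
  have h := congrArg (fun p : ℝ[X] => eval (Real.cos ((r:ℝ) * π / (k+2))) (derivative p))
    (U_eq_nodal k)
  simp only [derivative_C_mul, eval_mul, eval_C] at h
  rw [U_deriv k r hr] at h
  have hsin : Real.sin ((r:ℝ) * π / (k+2)) ≠ 0 := ne_of_gt (sin_theta_pos k r hr)
  have hk2 : ((k:ℝ) + 2) ≠ 0 := by positivity
  have h2 : ((2:ℝ)^(k+1)) ≠ 0 := by positivity
  have hε : ((-1:ℝ))^(r+1) = 1 ∨ ((-1:ℝ))^(r+1) = -1 := by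
    rcases Nat.even_or_odd (r+1) with he|ho
    · exact Or.inl he.neg_one_pow
    · exact Or.inr ho.neg_one_pow
  have hsT : Real.sin ((r:ℝ) * π / (k+2))^2 * 2^(k+1) ≠ 0 := by positivity
  rcases hε with h'|h' <;> rw [h'] at h ⊢
  · have hE : eval (Real.cos ((r:ℝ) * π / (k+2)))
        (derivative (Lagrange.nodal (Finset.Icc 1 (k+1))
          (fun r : ℕ => Real.cos ((r:ℝ) * π / (k+2)))))
        = ((k:ℝ)+2) / (Real.sin ((r:ℝ) * π / (k+2))^2 * 2^(k+1)) := by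
      rw [eq_div_iff hsT]
      rw [div_eq_iff (pow_ne_zero 2 hsin)] at h
      linear_combination -h
    rw [hE, inv_div]
    ring
  · have hE : eval (Real.cos ((r:ℝ) * π / (k+2)))
        (derivative (Lagrange.nodal (Finset.Icc 1 (k+1))
          (fun r : ℕ => Real.cos ((r:ℝ) * π / (k+2)))))
        = -(((k:ℝ)+2) / (Real.sin ((r:ℝ) * π / (k+2))^2 * 2^(k+1))) := by
      rw [← neg_div, eq_div_iff hsT]
      rw [div_eq_iff (pow_ne_zero 2 hsin)] at h
      first
      | linear_combination -h
      | linear_combination h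
    rw [hE, inv_neg, inv_div]
    ring

theorem chebyshevU_ratio_partial_fractions (k i : ℕ) (hik : i ≤ k) (x : ℝ)
    (hx : ∀ r ∈ Finset.Icc 1 (k + 1), x ≠ Real.cos (r * π / (k + 2))) :
    (Chebyshev.U ℝ ((k : ℤ) - i)).eval x / (Chebyshev.U ℝ ((k : ℤ) + 1)).eval x =
      (1 / (k + 2)) * ∑ r ∈ Finset.Icc 1 (k + 1),
        (-1) ^ (r + 1) * (Chebyshev.U ℝ ((k : ℤ) - i)).eval (Real.cos (r * π / (k + 2))) *
          (Real.sin (r * π / (k + 2))) ^ 2 / (x - Real.cos (r * π / (k + 2))) := by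
  classical
  have hcard : #(Finset.Icc 1 (k+1)) = k+1 := by simp [Nat.card_Icc]
  have hPcast : (k:ℤ) - i = ((k - i : ℕ) : ℤ) := by omega
  have hPdeg : (U ℝ ((k:ℤ) - i)).degree < (#(Finset.Icc 1 (k+1)) : ℕ) := by
    rw [hcard]
    refine lt_of_le_of_lt degree_le_natDegree ?_
    rw [hPcast, (U_natDegree_coeff (k-i)).1]
    exact_mod_cast (by omega : k - i < k + 1)
  have hx' : ∀ r ∈ Finset.Icc 1 (k+1), x ≠ (fun r : ℕ => Real.cos ((r:ℝ) * π / (k+2))) r := hx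
  have hint := Lagrange.eq_interpolate (f := U ℝ ((k:ℤ) - i)) (nodes_injOn k) hPdeg
  have hevalx : (U ℝ ((k:ℤ) - i)).eval x
      = eval x (Lagrange.nodal (Finset.Icc 1 (k+1)) (fun r : ℕ => Real.cos ((r:ℝ) * π / (k+2))))
        * ∑ r ∈ Finset.Icc 1 (k+1),
            Lagrange.nodalWeight (Finset.Icc 1 (k+1)) (fun r : ℕ => Real.cos ((r:ℝ) * π / (k+2))) r
              * (x - Real.cos ((r:ℝ) * π / (k+2)))⁻¹
              * (U ℝ ((k:ℤ) - i)).eval (Real.cos ((r:ℝ) * π / (k+2))) := by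
    conv_lhs => rw [hint]
    exact Lagrange.eval_interpolate_not_at_node _ hx'
  have hUx : (U ℝ ((k:ℤ)+1)).eval x
      = 2^(k+1) * eval x (Lagrange.nodal (Finset.Icc 1 (k+1))
          (fun r : ℕ => Real.cos ((r:ℝ) * π / (k+2)))) := by
    rw [U_eq_nodal k]; simp
  have hnz : eval x (Lagrange.nodal (Finset.Icc 1 (k+1))
      (fun r : ℕ => Real.cos ((r:ℝ) * π / (k+2)))) ≠ 0 :=
    Lagrange.eval_nodal_not_at_node hx'
  rw [hevalx, hUx, mul_comm ((2:ℝ)^(k+1)) _, mul_div_mul_left _ _ hnz, Finset.sum_div,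
    Finset.mul_sum]
  refine Finset.sum_congr rfl fun r hrs => ?_
  rw [weight_eq k r hrs]
  have hxr : x - Real.cos ((r:ℝ) * π / (k+2)) ≠ 0 := sub_ne_zero.mpr (hx r hrs)
  have hk2 : ((k:ℝ) + 2) ≠ 0 := by positivity
  have h2 : ((2:ℝ)^(k+1)) ≠ 0 := by positivity
  field_simp
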